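/- Let P ⊂ ℝ^{k+1} be a full-dimensional convex polytope, q a line meeting the interior of P in general position, and L any 2-plane containing q. Then N = P ∩ L is a convex polygon containing a segment of q in its interior, and for each vertex v of N not on q, the two sides of N at v lie in two distinct facets of P. -/

import Mathlib

open Set

/-- A convex polytope: the convex hull of a finite nonempty set of points. -/
def IsPolytope {n : ℕ} (P : Set (EuclideanSpace ℝ (Fin n))) : Prop :=
  ∃ S : Finset (EuclideanSpace ℝ (Fin n)), S.Nonempty ∧ P = convexHull ℝ (S : Set (EuclideanSpace ℝ (Fin n)))

/-- The (affine) dimension of a set: the rank of the direction of its affine span. -/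
noncomputable def pdim {n : ℕ} (P : Set (EuclideanSpace ℝ (Fin n))) : ℕ :=
  Module.finrank ℝ (affineSpan ℝ P).direction

/-- `F` is a (nonempty, exposed) face of `P` of dimension `c`; note `IsExposed ℝ P P` holds,
so `P` counts as the face of dimension `pdim P`. -/
def IsFaceDim {n : ℕ} (P F : Set (EuclideanSpace ℝ (Fin n))) (c : ℕ) : Prop :=
  IsExposed ℝ P F ∧ F.Nonempty ∧ pdim F = c

/-- `fc P c` is the number of faces of `P` of dimension `c`. -/
noncomputable def fc {n : ℕ} (P : Set (EuclideanSpace ℝ (Fin n))) (c : ℕ) : ℕ :=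
  {F | IsFaceDim P F c}.ncard

lemma slice_extremePoints_finite {ι : Type*} [Fintype ι] {W : Type*} [NormedAddCommGroup W]
    [NormedSpace ℝ W] (T : (ι → ℝ) →ₗ[ℝ] W) (L : AffineSubspace ℝ W) :
    ({μ : ι → ℝ | (∀ i, 0 ≤ μ i) ∧ ∑ i, μ i = 1 ∧ T μ ∈ L}.extremePoints ℝ).Finite := by
  set C : Set (ι → ℝ) := {μ | (∀ i, 0 ≤ μ i) ∧ ∑ i, μ i = 1 ∧ T μ ∈ L} with hC
  have key : ∀ e₁ ∈ C.extremePoints ℝ, ∀ e₂ ∈ C.extremePoints ℝ,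
      (∀ i, e₁ i = 0 ↔ e₂ i = 0) → e₁ = e₂ := by
    intro e₁ he₁ e₂ he₂ hz
    by_contra hne
    rw [mem_extremePoints] at he₁ he₂
    obtain ⟨⟨he₁nn, he₁sum, he₁L⟩, he₁ext⟩ := he₁
    obtain ⟨⟨he₂nn, he₂sum, he₂L⟩, -⟩ := he₂
    have hPos : ∃ i, 0 < e₁ i := by
      by_contra h
      push_neg at h
      have h0 : ∀ i ∈ Finset.univ, e₁ i = 0 := fun i _ => le_antisymm (h i) (he₁nn i)
      rw [Finset.sum_congr rfl h0] at he₁sum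
      simp at he₁sum
    obtain ⟨i₀, hi₀⟩ := hPos
    haveI : Nonempty ι := ⟨i₀⟩
    set Pos : Finset ι := Finset.univ.filter (fun i => 0 < e₁ i) with hPosDef
    have hPosNe : Pos.Nonempty := ⟨i₀, by simp [hPosDef, hi₀]⟩
    set m : ℝ := Pos.inf' hPosNe e₁ with hmdef
    have hm : 0 < m := by
      rw [hmdef, Finset.lt_inf'_iff]
      intro i hi
      exact (Finset.mem_filter.mp hi).2
    set M : ℝ := Finset.univ.sup' Finset.univ_nonempty (fun i => |e₁ i - e₂ i|) with hMdef
    have hM0 : 0 ≤ M := le_trans (abs_nonneg _) (Finset.le_sup' (fun i => |e₁ i - e₂ i|) (Finset.mem_univ i₀))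
    set t : ℝ := m / (M + 1) with htdef
    have ht : 0 < t := div_pos hm (by linarith)
    have hbound : ∀ i, t * |e₁ i - e₂ i| < m := by
      intro i
      have h1 : |e₁ i - e₂ i| ≤ M := Finset.le_sup' (fun i => |e₁ i - e₂ i|) (Finset.mem_univ i)
      have h2 : t * |e₁ i - e₂ i| ≤ t * M := by
        exact mul_le_mul_of_nonneg_left h1 ht.le
      have h3 : t * M < m := by
        rw [htdef, div_mul_eq_mul_div, div_lt_iff₀ (by linarith : (0:ℝ) < M + 1)]
        nlinarith
      linarith
    set wp : ι → ℝ := e₁ + t • (e₁ - e₂) with hwp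
    set wm : ι → ℝ := e₁ - t • (e₁ - e₂) with hwm
    have hwpi : ∀ i, wp i = e₁ i + t * (e₁ i - e₂ i) := fun i => rfl
    have hwmi : ∀ i, wm i = e₁ i - t * (e₁ i - e₂ i) := fun i => rfl
    have habs : ∀ i, -(t * |e₁ i - e₂ i|) ≤ t * (e₁ i - e₂ i) ∧
        t * (e₁ i - e₂ i) ≤ t * |e₁ i - e₂ i| := by
      intro i
      constructor
      · nlinarith [neg_abs_le (e₁ i - e₂ i)]
      · nlinarith [le_abs_self (e₁ i - e₂ i)]
    have hkey : ∀ i, e₁ i ≠ 0 → t * |e₁ i - e₂ i| < e₁ i := by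
      intro i hi
      have hipos : 0 < e₁ i := lt_of_le_of_ne (he₁nn i) (Ne.symm hi)
      have : m ≤ e₁ i := Finset.inf'_le _ (by simp [hPosDef, hipos])
      linarith [hbound i]
    have hwpnn : ∀ i, 0 ≤ wp i := by
      intro i
      rw [hwpi]
      by_cases hi : e₁ i = 0
      · have hi2 : e₂ i = 0 := (hz i).mp hi
        simp [hi, hi2]
      · have := hkey i hi
        have := (habs i).1
        linarith
    have hwmnn : ∀ i, 0 ≤ wm i := by
      intro i
      rw [hwmi]
      by_cases hi : e₁ i = 0
      · have hi2 : e₂ i = 0 := (hz i).mp hi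
        simp [hi, hi2]
      · have := hkey i hi
        have := (habs i).2
        linarith
    have hsum : ∀ (c : ℝ), ∑ i, (e₁ i + c * (e₁ i - e₂ i)) = 1 + c * (1 - 1) := by
      intro c
      rw [Finset.sum_add_distrib, ← Finset.mul_sum, Finset.sum_sub_distrib, he₁sum, he₂sum]
    have hwpsum : ∑ i, wp i = 1 := by
      rw [Finset.sum_congr rfl (fun i _ => hwpi i), hsum]; ring
    have hwmsum : ∑ i, wm i = 1 := by
      have : ∀ i, wm i = e₁ i + (-t) * (e₁ i - e₂ i) := fun i => by rw [hwmi]; ring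
      rw [Finset.sum_congr rfl (fun i _ => this i), hsum]; ring
    have hTwp : T wp ∈ L := by
      have h1 : T wp = t • (T e₁ -ᵥ T e₂) +ᵥ T e₁ := by
        rw [hwp, map_add, map_smul, map_sub]
        simp [vsub_eq_sub, vadd_eq_add, add_comm]
      rw [h1]
      exact L.smul_vsub_vadd_mem t he₁L he₂L he₁L
    have hTwm : T wm ∈ L := by
      have h1 : T wm = (-t) • (T e₁ -ᵥ T e₂) +ᵥ T e₁ := by
        rw [hwm, map_sub, map_smul, map_sub]
        simp [vsub_eq_sub, vadd_eq_add, neg_smul]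
        abel
      rw [h1]
      exact L.smul_vsub_vadd_mem (-t) he₁L he₂L he₁L
    have hwpC : wp ∈ C := ⟨hwpnn, hwpsum, hTwp⟩
    have hwmC : wm ∈ C := ⟨hwmnn, hwmsum, hTwm⟩
    have hseg : e₁ ∈ openSegment ℝ wp wm := by
      refine ⟨1/2, 1/2, by norm_num, by norm_num, by norm_num, ?_⟩
      rw [hwp, hwm]
      module
    obtain ⟨h1, -⟩ := he₁ext wp hwpC wm hwmC hseg
    rw [hwp] at h1
    have : t • (e₁ - e₂) = 0 := by
      have := congrArg (fun x => x - e₁) h1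
      simpa [add_sub_cancel_left] using this
    rcases smul_eq_zero.mp this with h | h
    · exact absurd h (ne_of_gt ht)
    · exact hne (sub_eq_zero.mp h)
  have hinj : Set.InjOn (fun e => {i | e i = 0}) (C.extremePoints ℝ) := by
    intro e₁ h₁ e₂ h₂ h
    refine key e₁ h₁ e₂ h₂ (fun i => ?_)
    simpa using Set.ext_iff.mp h i
  exact Set.Finite.of_finite_image (Set.toFinite _) hinj

lemma inter_extremePoints_finite {n : ℕ} (S : Finset (EuclideanSpace ℝ (Fin n)))
    (L : AffineSubspace ℝ (EuclideanSpace ℝ (Fin n))) :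
    (((convexHull ℝ (S : Set (EuclideanSpace ℝ (Fin n)))) ∩ L).extremePoints ℝ).Finite := by
  classical
  set T : ({x // x ∈ S} → ℝ) →ₗ[ℝ] EuclideanSpace ℝ (Fin n) :=
    { toFun := fun μ => ∑ i : {x // x ∈ S}, μ i • (i : EuclideanSpace ℝ (Fin n))
      map_add' := by
        intro x y
        simp [add_smul, Finset.sum_add_distrib]
      map_smul' := by
        intro c x
        simp [Finset.smul_sum, smul_smul] } with hT
  set C : Set ({x // x ∈ S} → ℝ) := {μ | (∀ i, 0 ≤ μ i) ∧ ∑ i, μ i = 1 ∧ T μ ∈ L} with hCdef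
  set N := (convexHull ℝ (S : Set (EuclideanSpace ℝ (Fin n)))) ∩ L with hNdef
  -- image of C is N
  have hTC : ∀ μ ∈ C, T μ ∈ N := by
    rintro μ ⟨hnn, hsum, hL⟩
    refine ⟨?_, hL⟩
    have := Finset.centerMass_mem_convexHull (t := Finset.univ)
      (w := μ) (z := fun i : {x // x ∈ S} => (i : EuclideanSpace ℝ (Fin n))) (fun i _ => hnn i)
      (by rw [hsum]; norm_num) (fun i _ => i.2)
    rwa [Finset.centerMass_eq_of_sum_1 _ _ hsum] at this
  have hsurj : ∀ x ∈ N, ∃ μ ∈ C, T μ = x := by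
    rintro x ⟨hxP, hxL⟩
    rw [Finset.convexHull_eq] at hxP
    obtain ⟨w, hw0, hw1, hwx⟩ := hxP
    refine ⟨fun i => w i, ⟨fun i => hw0 _ i.2, ?_, ?_⟩, ?_⟩
    · rw [Finset.univ_eq_attach, Finset.sum_attach S w, hw1]
    · show T _ ∈ L
      have hTx : T (fun i => w i) = x := by
        rw [hT]
        simp only [LinearMap.coe_mk, AddHom.coe_mk]
        show ∑ i ∈ S.attach, w i • (i : EuclideanSpace ℝ (Fin n)) = x
        rw [Finset.sum_attach S (fun y => w y • y)]
        rw [← Finset.centerMass_eq_of_sum_1 _ _ hw1] at *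
        exact hwx
      rw [hTx]; exact hxL
    · rw [hT]
      simp only [LinearMap.coe_mk, AddHom.coe_mk]
      show ∑ i ∈ S.attach, w i • (i : EuclideanSpace ℝ (Fin n)) = x
      rw [Finset.sum_attach S (fun y => w y • y)]
      rw [← Finset.centerMass_eq_of_sum_1 _ _ hw1]
      exact hwx
  -- C is compact and convex
  have hCconv : Convex ℝ C := by
    rintro μ hμ ν hν a b ha hb hab
    obtain ⟨hμnn, hμsum, hμL⟩ := hμ
    obtain ⟨hνnn, hνsum, hνL⟩ := hν
    refine ⟨fun i => add_nonneg (mul_nonneg ha (hμnn i)) (mul_nonneg hb (hνnn i)), ?_, ?_⟩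
    · have : ∀ i, (a • μ + b • ν) i = a * μ i + b * ν i := fun i => rfl
      rw [Finset.sum_congr rfl (fun i _ => this i), Finset.sum_add_distrib,
        ← Finset.mul_sum, ← Finset.mul_sum, hμsum, hνsum]
      simpa using hab
    · have : T (a • μ + b • ν) = a • T μ + b • T ν := by rw [map_add, map_smul, map_smul]
      rw [this]
      exact L.convex hμL hνL ha hb hab
  have hCclosed : IsClosed C := by
    have h1 : IsClosed {μ : {x // x ∈ S} → ℝ | ∀ i, 0 ≤ μ i} := by
      have : {μ : {x // x ∈ S} → ℝ | ∀ i, 0 ≤ μ i} = ⋂ i, {μ | 0 ≤ μ i} := by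
        ext μ; simp
      rw [this]
      exact isClosed_iInter fun i => isClosed_le continuous_const (continuous_apply i)
    have h2 : IsClosed {μ : {x // x ∈ S} → ℝ | ∑ i, μ i = 1} :=
      isClosed_eq (by exact continuous_finset_sum _ fun i _ => continuous_apply i) continuous_const
    have h3 : IsClosed {μ : {x // x ∈ S} → ℝ | T μ ∈ L} :=
      (L.closed_of_finiteDimensional).preimage T.continuous_of_finiteDimensional
    have : C = {μ | ∀ i, 0 ≤ μ i} ∩ ({μ | ∑ i, μ i = 1} ∩ {μ | T μ ∈ L}) := rfl
    rw [this]
    exact h1.inter (h2.inter h3)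
  have hCcomp : IsCompact C := by
    refine IsCompact.of_isClosed_subset (isCompact_univ_pi fun i => isCompact_Icc
      (a := (0:ℝ)) (b := 1)) hCclosed ?_
    rintro μ ⟨hnn, hsum, -⟩
    intro i _
    refine ⟨hnn i, ?_⟩
    calc μ i ≤ ∑ j, μ j := Finset.single_le_sum (fun j _ => hnn j) (Finset.mem_univ i)
    _ = 1 := hsum
  -- lifting extreme points
  have hlift : N.extremePoints ℝ ⊆ T '' (C.extremePoints ℝ) := by
    intro v hv
    rw [mem_extremePoints] at hv
    obtain ⟨hvN, hvext⟩ := hv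
    set Fib := C ∩ T ⁻¹' {v} with hFibdef
    have hFibne : Fib.Nonempty := by
      obtain ⟨μ, hμC, hμT⟩ := hsurj v hvN
      exact ⟨μ, hμC, by simp [hμT]⟩
    have hFibcomp : IsCompact Fib :=
      IsCompact.of_isClosed_subset hCcomp
        (hCclosed.inter (IsClosed.preimage T.continuous_of_finiteDimensional isClosed_singleton))
        Set.inter_subset_left
    obtain ⟨μ, hμ⟩ := hFibcomp.extremePoints_nonempty hFibne
    rw [mem_extremePoints] at hμ
    obtain ⟨⟨hμC, hμT⟩, hμext⟩ := hμ
    simp only [Set.mem_preimage, Set.mem_singleton_iff] at hμT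
    refine ⟨μ, ?_, hμT⟩
    rw [mem_extremePoints]
    refine ⟨hμC, fun x₁ hx₁ x₂ hx₂ hseg => ?_⟩
    obtain ⟨a, b, ha, hb, hab, habμ⟩ := hseg
    have hvseg : v ∈ openSegment ℝ (T x₁) (T x₂) := by
      refine ⟨a, b, ha, hb, hab, ?_⟩
      rw [← map_smul, ← map_smul, ← map_add, habμ, hμT]
    obtain ⟨h1, h2⟩ := hvext (T x₁) (hTC x₁ hx₁) (T x₂) (hTC x₂ hx₂) hvseg
    have hx₁F : x₁ ∈ Fib := ⟨hx₁, by simp [h1]⟩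
    have hx₂F : x₂ ∈ Fib := ⟨hx₂, by simp [h2]⟩
    exact hμext x₁ hx₁F x₂ hx₂F ⟨a, b, ha, hb, hab, habμ⟩
  refine Set.Finite.subset (Set.Finite.image T ?_) hlift
  rw [hCdef]
  exact slice_extremePoints_finite T L

lemma isPolytope_inter {n : ℕ} (S : Finset (EuclideanSpace ℝ (Fin n)))
    (L : AffineSubspace ℝ (EuclideanSpace ℝ (Fin n)))
    (hne : ((convexHull ℝ (S : Set (EuclideanSpace ℝ (Fin n)))) ∩ L).Nonempty) :
    ∃ Q : Finset (EuclideanSpace ℝ (Fin n)), Q.Nonempty ∧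
      (convexHull ℝ (S : Set (EuclideanSpace ℝ (Fin n)))) ∩ L
        = convexHull ℝ (Q : Set (EuclideanSpace ℝ (Fin n))) := by
  classical
  set N := (convexHull ℝ (S : Set (EuclideanSpace ℝ (Fin n)))) ∩ L with hNdef
  have hcomp : IsCompact N :=
    (S.finite_toSet.isCompact_convexHull ℝ).inter_right L.closed_of_finiteDimensional
  have hconv : Convex ℝ N := (convex_convexHull ℝ _).inter L.convex
  have hfin := inter_extremePoints_finite S L
  have hKM := closure_convexHull_extremePoints hcomp hconv
  have hclosed : IsClosed (convexHull ℝ (N.extremePoints ℝ)) :=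
    Set.Finite.isClosed_convexHull ℝ hfin
  have hNeq : N = convexHull ℝ (N.extremePoints ℝ) := by
    conv_lhs => rw [← hKM]
    rw [hclosed.closure_eq]
  have hEPne : (N.extremePoints ℝ).Nonempty := by
    rcases Set.eq_empty_or_nonempty (N.extremePoints ℝ) with h | h
    · rw [h, convexHull_empty] at hNeq
      exact absurd hNeq hne.ne_empty
    · exact h
  refine ⟨hfin.toFinset, ?_, ?_⟩
  · rw [← Finset.coe_nonempty, Set.Finite.coe_toFinset]; exact hEPne
  · rw [hNeq]; congr 1; exact (Set.Finite.coe_toFinset hfin).symm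


set_option maxHeartbeats 4000000 in
/-- A 2-plane L containing a generic line q through the interior of a full-dimensional
polytope P cuts P in a polygon N containing a segment of q in its interior, and at
each vertex of N off q the two sides of N lie in two distinct facets of P. -/
theorem folding_plane_section {k : ℕ} (P : Set (EuclideanSpace ℝ (Fin (k + 1))))
    (hP : IsPolytope P) (hd : pdim P = k + 1)
    (p u : EuclideanSpace ℝ (Fin (k + 1))) (hu : u ≠ 0)
    (hint : ∃ s : ℝ, p + s • u ∈ interior P)
    (hgen : ∀ F, IsExposed ℝ P F → F ≠ P → pdim F ≤ k - 1 →
      ∀ x y, x ∈ F → y ∈ F → x ≠ y → ¬ Coplanar ℝ {x, y, p, p + u})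
    (L : AffineSubspace ℝ (EuclideanSpace ℝ (Fin (k + 1))))
    (hL : Module.finrank ℝ L.direction = 2) (hpL : p ∈ L) (hpuL : p + u ∈ L)
    (N : Set (EuclideanSpace ℝ (Fin (k + 1)))) (hN : N = P ∩ L) :
    (IsPolytope N ∧ pdim N = 2) ∧
    (∃ a b : ℝ, a < b ∧ ∀ s ∈ Set.Icc a b, p + s • u ∈ intrinsicInterior ℝ N) ∧
    ∀ v : EuclideanSpace ℝ (Fin (k + 1)), IsFaceDim N {v} 0 → (∀ s : ℝ, v ≠ p + s • u) →
      ∃ S₁ S₂ T₁ T₂ : Set (EuclideanSpace ℝ (Fin (k + 1))), S₁ ≠ S₂ ∧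
        IsFaceDim N S₁ 1 ∧ IsFaceDim N S₂ 1 ∧ v ∈ S₁ ∧ v ∈ S₂ ∧
        IsFaceDim P T₁ k ∧ IsFaceDim P T₂ k ∧ T₁ ≠ T₂ ∧ S₁ ⊆ T₁ ∧ S₂ ⊆ T₂ := by
  classical
  obtain ⟨S, hSne, hPS⟩ := hP
  obtain ⟨s₀, hz₀⟩ := hint
  set z₀ := p + s₀ • u with hz₀def
  have hPconv : Convex ℝ P := hPS ▸ convex_convexHull ℝ _
  have hPcomp : IsCompact P := hPS ▸ S.finite_toSet.isCompact_convexHull ℝ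
  have huD : u ∈ L.direction := by
    have := AffineSubspace.vsub_mem_direction hpuL hpL
    simpa [vsub_eq_sub, add_sub_cancel_left] using this
  have hqL : ∀ s : ℝ, p + s • u ∈ L := by
    intro s
    have := AffineSubspace.vadd_mem_of_mem_direction (L.direction.smul_mem s huD) hpL
    simpa [vadd_eq_add, add_comm] using this
  have hzN : z₀ ∈ N := by rw [hN]; exact ⟨interior_subset hz₀, hqL s₀⟩
  obtain ⟨ε, hε, hball⟩ := Metric.isOpen_iff.mp isOpen_interior z₀ hz₀
  have hDle : L.direction ≤ (affineSpan ℝ N).direction := by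
    intro d hd
    rcases eq_or_ne d 0 with rfl | hd0
    · exact Submodule.zero_mem _
    have hdn : 0 < ‖d‖ := norm_pos_iff.mpr hd0
    set c : ℝ := ε / (2 * ‖d‖) with hcdef
    have hc : 0 < c := div_pos hε (by positivity)
    have hmem : z₀ + c • d ∈ N := by
      rw [hN]
      constructor
      · apply interior_subset
        apply hball
        rw [Metric.mem_ball, dist_eq_norm]
        have h1 : ‖z₀ + c • d - z₀‖ = c * ‖d‖ := by
          rw [add_sub_cancel_left, norm_smul, Real.norm_eq_abs, abs_of_pos hc]
        rw [h1, hcdef, div_mul_eq_mul_div, div_lt_iff₀ (by positivity)]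
        nlinarith
      · have := AffineSubspace.vadd_mem_of_mem_direction (L.direction.smul_mem c hd) (hqL s₀)
        simpa [vadd_eq_add, add_comm] using this
    have hcd : c • d ∈ (affineSpan ℝ N).direction := by
      rw [direction_affineSpan]
      have := vsub_mem_vectorSpan ℝ hmem hzN
      simpa [vsub_eq_sub, add_sub_cancel_left] using this
    have := (affineSpan ℝ N).direction.smul_mem c⁻¹ hcd
    rwa [smul_smul, inv_mul_cancel₀ (ne_of_gt hc), one_smul] at this
  have hNL : N ⊆ (L : Set _) := by rw [hN]; exact Set.inter_subset_right
  have hspanle : affineSpan ℝ N ≤ L := affineSpan_le.mpr hNL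
  have hdir_eq : (affineSpan ℝ N).direction = L.direction :=
    le_antisymm (AffineSubspace.direction_le hspanle) hDle
  have hpdimN : pdim N = 2 := by rw [pdim, hdir_eq, hL]
  have hspanN : affineSpan ℝ N = L :=
    AffineSubspace.ext_of_direction_eq hdir_eq ⟨z₀, subset_affineSpan ℝ N hzN, hqL s₀⟩
  have hNpoly : IsPolytope N := by
    obtain ⟨Q, hQne, hQ⟩ := isPolytope_inter S L
      (by have hzN' := hzN; rw [hN, hPS] at hzN'; exact ⟨z₀, hzN'⟩)
    exact ⟨Q, hQne, by rw [hN, hPS]; exact hQ⟩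
  refine ⟨⟨hNpoly, hpdimN⟩, ?_, ?_⟩
  · set δ := ε / (2 * (‖u‖ + 1)) with hδdef
    have hδ : 0 < δ := by positivity
    refine ⟨s₀ - δ, s₀ + δ, by linarith, ?_⟩
    intro s hs
    have hxi : p + s • u ∈ interior P := by
      apply hball
      rw [Metric.mem_ball, dist_eq_norm]
      have h1 : p + s • u - z₀ = (s - s₀) • u := by rw [hz₀def]; module
      rw [h1, norm_smul, Real.norm_eq_abs]
      have h2 : |s - s₀| ≤ δ := by
        rw [abs_le]; exact ⟨by linarith [hs.1], by linarith [hs.2]⟩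
      have h3 : δ * ‖u‖ < ε := by
        rw [hδdef, div_mul_eq_mul_div, div_lt_iff₀ (by positivity)]
        nlinarith [norm_nonneg u]
      nlinarith [norm_nonneg u, abs_nonneg (s - s₀)]
    rw [mem_intrinsicInterior]
    refine ⟨⟨p + s • u, by rw [hspanN]; exact hqL s⟩, ?_, rfl⟩
    have hopen : IsOpen ((Subtype.val : affineSpan ℝ N → _) ⁻¹' interior P) :=
      isOpen_interior.preimage continuous_subtype_val
    have hsub : ((Subtype.val : affineSpan ℝ N → _) ⁻¹' interior P) ⊆
        ((Subtype.val : affineSpan ℝ N → _) ⁻¹' N) := by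
      intro y hy
      obtain ⟨yv, hyL⟩ := y
      simp only [Set.mem_preimage] at hy ⊢
      rw [hN]
      refine ⟨interior_subset hy, ?_⟩
      rw [hspanN] at hyL
      exact hyL
    exact interior_maximal hsub hopen hxi
  · intro v hv hvq
    clear hvq
    have hNP : N ⊆ P := by rw [hN]; exact Set.inter_subset_left
    have hNconv : Convex ℝ N := by rw [hN]; exact hPconv.inter L.convex
    have hk : 1 ≤ k := by
      have h1 : Module.finrank ℝ (EuclideanSpace ℝ (Fin (k+1))) = k + 1 :=
        finrank_euclideanSpace_fin
      have h2 := Submodule.finrank_le L.direction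
      rw [hL, h1] at h2
      omega
    obtain ⟨hvexp, -, -⟩ := hv
    obtain ⟨f, hf⟩ := hvexp ⟨v, rfl⟩
    have hvmem : v ∈ {x ∈ N | ∀ y ∈ N, f y ≤ f x} := by rw [← hf]; rfl
    obtain ⟨hvN, hfmax⟩ := hvmem
    have hflt : ∀ x ∈ N, x ≠ v → f x < f v := by
      intro x hx hxv
      rcases lt_or_eq_of_le (hfmax x hx) with h | h
      · exact h
      · exfalso
        apply hxv
        have : x ∈ ({v} : Set _) := by
          rw [hf]
          exact ⟨hx, fun y hy => h ▸ hfmax y hy⟩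
        exact this
    obtain ⟨Q, -, hNQ⟩ := hNpoly
    set Q' : Finset (EuclideanSpace ℝ (Fin (k+1))) := insert v Q with hQ'def
    have hQ'sub : (Q' : Set (EuclideanSpace ℝ (Fin (k+1)))) ⊆ N := by
      intro x hx
      rcases Finset.mem_insert.mp (by exact_mod_cast hx) with rfl | hxQ
      · exact hvN
      · rw [hNQ]; exact subset_convexHull ℝ _ (by exact_mod_cast hxQ)
    have hNQ' : N = convexHull ℝ (Q' : Set (EuclideanSpace ℝ (Fin (k+1)))) := by
      apply le_antisymm
      · rw [hNQ]
        exact convexHull_mono (by exact_mod_cast Finset.subset_insert v Q)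
      · exact convexHull_min hQ'sub hNconv
    set R : Finset (EuclideanSpace ℝ (Fin (k+1))) := Q'.erase v with hRdef
    have hRN : ∀ w ∈ R, w ∈ N := fun w hw => hQ'sub (Finset.erase_subset _ _ hw)
    have hRv : ∀ w ∈ R, w ≠ v := fun w hw => Finset.ne_of_mem_erase hw
    have hpdim_singleton : pdim ({v} : Set (EuclideanSpace ℝ (Fin (k+1)))) = 0 := by
      rw [pdim, direction_affineSpan, vectorSpan_singleton]
      exact finrank_bot ℝ _
    have hRne : R.Nonempty := by
      by_contra h
      rw [Finset.not_nonempty_iff_eq_empty] at h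
      have hQ'v : (Q' : Set (EuclideanSpace ℝ (Fin (k+1)))) ⊆ {v} := by
        intro x hx
        by_contra hxv
        have : x ∈ R := Finset.mem_erase.mpr ⟨hxv, by exact_mod_cast hx⟩
        rw [h] at this
        exact absurd this (Finset.notMem_empty x)
      have hNv : N = {v} := by
        apply le_antisymm
        · rw [hNQ']
          exact convexHull_min hQ'v (convex_singleton v)
        · intro x hx
          rw [hx]
          exact hvN
      rw [hNv, hpdim_singleton] at hpdimN
      exact absurd hpdimN (by norm_num)
    have fneg : ∀ w ∈ R, f (w - v) < 0 := by
      intro w hw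
      rw [map_sub]
      have := hflt w (hRN w hw) (hRv w hw)
      linarith
    set D := L.direction with hDdef
    -- find d₀ ∈ D with f d₀ = 0, d₀ ≠ 0
    obtain ⟨d₀, hd₀D, hfd₀, hd₀ne⟩ :
        ∃ d₀ ∈ D, f d₀ = 0 ∧ d₀ ≠ 0 := by
      set fd : D →ₗ[ℝ] ℝ := (f : EuclideanSpace ℝ (Fin (k+1)) →ₗ[ℝ] ℝ).comp D.subtype with hfd
      have hker : LinearMap.ker fd ≠ ⊥ := by
        intro hbot
        have h1 := LinearMap.finrank_range_add_finrank_ker fd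
        rw [hbot] at h1
        have h2 : Module.finrank ℝ (LinearMap.range fd) ≤ 1 := by
          have := Submodule.finrank_le (LinearMap.range fd)
          simpa using this
        rw [finrank_bot] at h1
        have h3 : Module.finrank ℝ D = 2 := hL
        omega
      obtain ⟨x, hxmem, hxne⟩ := (Submodule.ne_bot_iff _).mp hker
      refine ⟨(x : EuclideanSpace ℝ (Fin (k+1))), x.2, hxmem, ?_⟩
      simpa using hxne
    obtain ⟨g, hgd₀⟩ : ∃ g : EuclideanSpace ℝ (Fin (k+1)) →L[ℝ] ℝ, 0 < g d₀ := by
      refine ⟨innerSL ℝ d₀, ?_⟩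
      have h0 : (innerSL ℝ d₀) d₀ = inner ℝ d₀ d₀ := rfl
      rw [h0, real_inner_self_eq_norm_sq]
      have := norm_pos_iff.mpr hd₀ne
      positivity
    set t : EuclideanSpace ℝ (Fin (k+1)) → ℝ := fun w => g (w - v) / (-(f (w - v))) with htdef
    have keyg : ∀ w ∈ R, g (w - v) = -(t w * f (w - v)) := by
      intro w hw
      have hne : f (w - v) ≠ 0 := ne_of_lt (fneg w hw)
      show g (w - v) = -((g (w - v) / (-(f (w - v)))) * f (w - v))
      have hb : -(f (w - v)) ≠ 0 := by intro h; apply hne; linarith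
      have h2 : (g (w - v) / (-(f (w - v)))) * (-(f (w - v))) = g (w - v) :=
        div_mul_cancel₀ _ hb
      linear_combination -h2
    set t₁ : ℝ := R.inf' hRne t with ht₁def
    set t₂ : ℝ := R.sup' hRne t with ht₂def
    obtain ⟨w₁, hw₁R, hw₁t⟩ := Finset.exists_mem_eq_inf' hRne t
    obtain ⟨w₂, hw₂R, hw₂t⟩ := Finset.exists_mem_eq_sup' hRne t
    have ht₁le : ∀ w ∈ R, t₁ ≤ t w := fun w hw => Finset.inf'_le t hw
    have ht₂ge : ∀ w ∈ R, t w ≤ t₂ := fun w hw => Finset.le_sup' t hw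
    have hDvs : D = vectorSpan ℝ (Q' : Set (EuclideanSpace ℝ (Fin (k+1)))) := by
      rw [← hdir_eq, hNQ', affineSpan_convexHull, direction_affineSpan]
    have hlt : t₁ < t₂ := by
      rcases lt_or_ge t₁ t₂ with h | h
      · exact h
      exfalso
      have hconst : ∀ w ∈ R, t w = t₁ :=
        fun w hw => le_antisymm (le_trans (ht₂ge w hw) h) (ht₁le w hw)
      obtain ⟨φ, hφ⟩ : ∃ φ : EuclideanSpace ℝ (Fin (k+1)) →L[ℝ] ℝ,
          ∀ x, φ x = g x + t₁ * f x := ⟨g + t₁ • f, fun x => rfl⟩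
      have hφR : ∀ w ∈ R, φ (w - v) = 0 := by
        intro w hw
        have h1 := keyg w hw
        rw [hconst w hw] at h1
        rw [map_sub g, map_sub f] at h1
        rw [hφ, map_sub g, map_sub f]
        linarith
      have hDker : D ≤ LinearMap.ker (φ : EuclideanSpace ℝ (Fin (k+1)) →ₗ[ℝ] ℝ) := by
        rw [hDvs, vectorSpan_eq_span_vsub_set_right ℝ
          (show v ∈ (Q' : Set (EuclideanSpace ℝ (Fin (k+1)))) from by
            exact_mod_cast Finset.mem_insert_self v Q)]
        rw [Submodule.span_le]
        rintro x ⟨w, hw, rfl⟩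
        rcases eq_or_ne w v with rfl | hwv
        · simp
        · have hwR : w ∈ R := Finset.mem_erase.mpr ⟨hwv, by exact_mod_cast hw⟩
          simpa [vsub_eq_sub] using hφR w hwR
      have h0 : φ d₀ = 0 := hDker hd₀D
      rw [hφ, hfd₀] at h0
      nlinarith
    obtain ⟨h₁, hh₁⟩ : ∃ h₁ : EuclideanSpace ℝ (Fin (k+1)) →L[ℝ] ℝ,
        ∀ x, h₁ x = -(t₁ * f x + g x) := ⟨-(t₁ • f + g), fun x => rfl⟩
    obtain ⟨h₂, hh₂⟩ : ∃ h₂ : EuclideanSpace ℝ (Fin (k+1)) →L[ℝ] ℝ,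
        ∀ x, h₂ x = t₂ * f x + g x := ⟨t₂ • f + g, fun x => rfl⟩
    have happ₁ : ∀ w, h₁ w - h₁ v = -(t₁ * f (w - v) + g (w - v)) := by
      intro w
      rw [hh₁ w, hh₁ v, map_sub f, map_sub g]
      ring
    have happ₂ : ∀ w, h₂ w - h₂ v = t₂ * f (w - v) + g (w - v) := by
      intro w
      rw [hh₂ w, hh₂ v, map_sub f, map_sub g]
      ring
    have hval₁ : ∀ w ∈ R, h₁ w - h₁ v = (-(f (w - v))) * (t₁ - t w) := by
      intro w hw
      rw [happ₁ w, keyg w hw]; ring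
    have hval₂ : ∀ w ∈ R, h₂ w - h₂ v = (-(f (w - v))) * (t w - t₂) := by
      intro w hw
      rw [happ₂ w, keyg w hw]; ring
    have hNh₁ : ∀ x ∈ N, h₁ x ≤ h₁ v := by
      intro x hx
      rw [hNQ'] at hx
      have hgen' : (Q' : Set (EuclideanSpace ℝ (Fin (k+1)))) ⊆ {x | h₁ x ≤ h₁ v} := by
        intro w hw
        rcases eq_or_ne w v with rfl | hwv
        · exact Set.mem_setOf.mpr (le_refl _)
        · have hwR : w ∈ R := Finset.mem_erase.mpr ⟨hwv, by exact_mod_cast hw⟩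
          have := hval₁ w hwR
          have hf' := fneg w hwR
          have ht' := ht₁le w hwR
          simp only [Set.mem_setOf_eq]
          nlinarith
      exact convexHull_min hgen' (convex_halfSpace_le ⟨h₁.map_add, h₁.map_smul⟩ (h₁ v)) hx
    have hNh₂ : ∀ x ∈ N, h₂ x ≤ h₂ v := by
      intro x hx
      rw [hNQ'] at hx
      have hgen' : (Q' : Set (EuclideanSpace ℝ (Fin (k+1)))) ⊆ {x | h₂ x ≤ h₂ v} := by
        intro w hw
        rcases eq_or_ne w v with rfl | hwv
        · exact Set.mem_setOf.mpr (le_refl _)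
        · have hwR : w ∈ R := Finset.mem_erase.mpr ⟨hwv, by exact_mod_cast hw⟩
          have := hval₂ w hwR
          have hf' := fneg w hwR
          have ht' := ht₂ge w hwR
          simp only [Set.mem_setOf_eq]
          nlinarith
      exact convexHull_min hgen' (convex_halfSpace_le ⟨h₂.map_add, h₂.map_smul⟩ (h₂ v)) hx
    have hh₁d₀ : h₁ d₀ ≠ 0 := by
      rw [hh₁ d₀, hfd₀]
      nlinarith
    have hh₂d₀ : h₂ d₀ ≠ 0 := by
      rw [hh₂ d₀, hfd₀]
      nlinarith
    have hw₁S : h₁ w₁ = h₁ v := by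
      have := hval₁ w₁ hw₁R
      rw [← hw₁t] at this
      have h0 : h₁ w₁ - h₁ v = 0 := by rw [this]; ring
      linarith
    have hw₂S : h₂ w₂ = h₂ v := by
      have := hval₂ w₂ hw₂R
      rw [← hw₂t] at this
      have h0 : h₂ w₂ - h₂ v = 0 := by rw [this]; ring
      linarith
    -- generic facet construction
    have hfacet : ∀ (w : EuclideanSpace ℝ (Fin (k+1))) (ψ : EuclideanSpace ℝ (Fin (k+1)) →L[ℝ] ℝ),
        w ∈ N → w ≠ v → (∀ x ∈ N, ψ x ≤ ψ v) → ψ w = ψ v → ψ d₀ ≠ 0 →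
        ∃ (T : Set (EuclideanSpace ℝ (Fin (k+1)))) (φ : EuclideanSpace ℝ (Fin (k+1)) →L[ℝ] ℝ),
          IsFaceDim P T k ∧ φ z₀ < φ v ∧ φ w = φ v ∧
          T = {x ∈ P | φ x = φ v} ∧ {x ∈ N | ψ x = ψ v} ⊆ T := by
      intro w ψ hwN hwv hψle hψw hψd₀
      have hwvne : w - v ≠ 0 := sub_ne_zero.mpr hwv
      set m : EuclideanSpace ℝ (Fin (k+1)) := v + (1/2 : ℝ) • (w - v) with hmdef
      have hmN : m ∈ N := by
        have h0 := hNconv hvN hwN (by norm_num : (0:ℝ) ≤ 1/2) (by norm_num : (0:ℝ) ≤ 1/2)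
          (by norm_num : (1/2 : ℝ) + 1/2 = 1)
        have heq : (1/2 : ℝ) • v + (1/2 : ℝ) • w = m := by rw [hmdef]; module
        rwa [heq] at h0
      have hmP : m ∈ P := hNP hmN
      have hmL : m ∈ L := hNL hmN
      have hψm : ψ m = ψ v := by
        have h0 : ψ m = ψ v + (1/2 : ℝ) * (ψ w - ψ v) := by
          rw [hmdef, map_add, map_smul, map_sub]
          simp [smul_eq_mul]
        rw [h0, hψw]; ring
      have hmni : m ∉ interior P := by
        intro hmI
        obtain ⟨ε', hε', hball'⟩ := Metric.isOpen_iff.mp isOpen_interior m hmI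
        have hd₀n : 0 < ‖d₀‖ := norm_pos_iff.mpr hd₀ne
        set c : ℝ := ε' / (2 * ‖d₀‖) with hcdef
        have hc : 0 < c := div_pos hε' (by positivity)
        have hmem : ∀ (s : ℝ), |s| = c → m + s • d₀ ∈ N := by
          intro s hs
          rw [hN]
          constructor
          · apply interior_subset
            apply hball'
            rw [Metric.mem_ball, dist_eq_norm]
            have hnrm : ‖m + s • d₀ - m‖ = |s| * ‖d₀‖ := by
              rw [add_sub_cancel_left, norm_smul, Real.norm_eq_abs]
            rw [hnrm, hs, hcdef, div_mul_eq_mul_div, div_lt_iff₀ (by positivity)]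
            nlinarith
          · have h0 := AffineSubspace.vadd_mem_of_mem_direction
              (L.direction.smul_mem s hd₀D) hmL
            simpa [vadd_eq_add, add_comm] using h0
        have hplus := hψle _ (hmem c (abs_of_pos hc))
        have hminus := hψle _ (hmem (-c) (by rw [abs_neg]; exact abs_of_pos hc))
        rw [map_add, map_smul] at hplus hminus
        simp only [smul_eq_mul] at hplus hminus
        rw [hψm] at hplus hminus
        have : ψ d₀ = 0 := by nlinarith
        exact hψd₀ this
      obtain ⟨φ, hφ⟩ := geometric_hahn_banach_open_point (hPconv.interior) isOpen_interior hmni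
      have hφle : ∀ x ∈ P, φ x ≤ φ m := by
        intro x hx
        by_contra hgt
        push_neg at hgt
        set A : ℝ := φ x - φ m with hA
        have hA0 : 0 < A := by rw [hA]; linarith
        set B : ℝ := |φ x - φ z₀| with hB
        have hB0 : 0 ≤ B := abs_nonneg _
        set θ : ℝ := min (1/2) (A / (2 * (B + 1))) with hθdef
        have hθ0 : 0 < θ := lt_min (by norm_num) (by positivity)
        have hθ1 : θ < 1 := lt_of_le_of_lt (min_le_left _ _) (by norm_num)
        have hseg : (1 - θ) • x + θ • z₀ ∈ interior P := by
          apply hPconv.openSegment_self_interior_subset_interior hx hz₀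
          exact ⟨1 - θ, θ, by linarith, hθ0, by ring, rfl⟩
        have hlt' := hφ _ hseg
        rw [map_add, map_smul, map_smul] at hlt'
        simp only [smul_eq_mul] at hlt'
        have hθB : θ * (B + 1) ≤ A / 2 := by
          calc θ * (B + 1) ≤ (A / (2 * (B + 1))) * (B + 1) :=
                mul_le_mul_of_nonneg_right (min_le_right _ _) (by linarith)
          _ = A / 2 := by field_simp
        have habs : φ x - φ z₀ ≤ B := le_abs_self _
        have hmul : θ * (φ x - φ z₀) ≤ θ * B := mul_le_mul_of_nonneg_left habs hθ0.le
        nlinarith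
      have hφv : φ v = φ m := by
        have h1 : φ v ≤ φ m := hφle v (hNP hvN)
        have h2 : φ w ≤ φ m := hφle w (hNP hwN)
        have h3 : φ m = φ v + (1/2 : ℝ) * (φ w - φ v) := by
          rw [hmdef, map_add, map_smul, map_sub]
          simp [smul_eq_mul]
        linarith
      have hφw : φ w = φ v := by
        have h1 : φ v ≤ φ m := hφle v (hNP hvN)
        have h2 : φ w ≤ φ m := hφle w (hNP hwN)
        have h3 : φ m = φ v + (1/2 : ℝ) * (φ w - φ v) := by
          rw [hmdef, map_add, map_smul, map_sub]
          simp [smul_eq_mul]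
        linarith
      set T : Set (EuclideanSpace ℝ (Fin (k+1))) := {x ∈ P | φ x = φ v} with hTdef
      have hzφ : φ z₀ < φ v := by
        have := hφ z₀ hz₀
        linarith [hφv]
      have hTexp : IsExposed ℝ P T := by
        intro _
        refine ⟨φ, ?_⟩
        ext x
        simp only [hTdef, Set.mem_setOf_eq]
        constructor
        · rintro ⟨hxP, hxe⟩
          exact ⟨hxP, fun y hy => by rw [hxe]; linarith [hφle y hy, hφv]⟩
        · rintro ⟨hxP, hxmax⟩
          have h1 : φ x ≤ φ m := hφle x hxP
          have h2 : φ m ≤ φ x := hxmax m hmP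
          exact ⟨hxP, by linarith⟩
      have hTne : T ≠ P := by
        intro h
        have hz₀P : z₀ ∈ P := interior_subset hz₀
        rw [← h] at hz₀P
        exact absurd hz₀P.2 (ne_of_lt hzφ)
      have hvT : v ∈ T := ⟨hNP hvN, rfl⟩
      have hwT : w ∈ T := ⟨hNP hwN, hφw⟩
      have hmT : m ∈ T := ⟨hmP, hφv.symm⟩
      have hkerφ : vectorSpan ℝ T ≤ LinearMap.ker (φ : EuclideanSpace ℝ (Fin (k+1)) →ₗ[ℝ] ℝ) := by
        rw [vectorSpan_def, Submodule.span_le]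
        rintro x hx
        rw [Set.mem_vsub] at hx
        obtain ⟨a, ha, b, hb, rfl⟩ := hx
        rw [SetLike.mem_coe, LinearMap.mem_ker]
        show φ (a -ᵥ b) = 0
        rw [vsub_eq_sub, map_sub, ha.2, hb.2]
        ring
      have hφne : LinearMap.ker (φ : EuclideanSpace ℝ (Fin (k+1)) →ₗ[ℝ] ℝ) ≠ ⊤ := by
        intro htop
        have hmem : z₀ - v ∈ LinearMap.ker (φ : EuclideanSpace ℝ (Fin (k+1)) →ₗ[ℝ] ℝ) := by
          rw [htop]; trivial
        rw [LinearMap.mem_ker] at hmem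
        have : φ z₀ - φ v = 0 := by rw [← map_sub]; exact hmem
        linarith
      have hpdimTle : pdim T ≤ k := by
        have hklt := Submodule.finrank_lt (K := ℝ)
          (V := EuclideanSpace ℝ (Fin (k+1))) hφne
        have htot : Module.finrank ℝ (EuclideanSpace ℝ (Fin (k+1))) = k + 1 :=
          finrank_euclideanSpace_fin
        have hmono := Submodule.finrank_mono hkerφ
        rw [pdim, direction_affineSpan]
        omega
      have hpdimTge : ¬ (pdim T ≤ k - 1) := by
        intro hle
        refine hgen T hTexp hTne hle v w hvT hwT (fun h => hwv h.symm) ?_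
        show Module.rank ℝ (vectorSpan ℝ ({v, w, p, p + u} : Set (EuclideanSpace ℝ (Fin (k+1))))) ≤ 2
        have hsub : ({v, w, p, p + u} : Set (EuclideanSpace ℝ (Fin (k+1)))) ⊆ (L : Set _) := by
          intro x hx
          simp only [Set.mem_insert_iff, Set.mem_singleton_iff] at hx
          rcases hx with rfl | rfl | rfl | rfl
          · exact hNL hvN
          · exact hNL hwN
          · exact hpL
          · exact hpuL
        have h1 : vectorSpan ℝ ({v, w, p, p + u} : Set (EuclideanSpace ℝ (Fin (k+1)))) ≤ D := by
          rw [vectorSpan_def, Submodule.span_le]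
          rintro x hx
          rw [Set.mem_vsub] at hx
          obtain ⟨a, ha, b, hb, rfl⟩ := hx
          exact AffineSubspace.vsub_mem_direction (hsub ha) (hsub hb)
        have h2 := Submodule.rank_mono h1
        have h3 : Module.rank ℝ D = 2 := by
          rw [← Module.finrank_eq_rank, hL]
          norm_num
        rw [h3] at h2
        exact h2
      have hpdimT : pdim T = k := by omega
      -- the subset property
      have hWle : ∀ x ∈ N, ψ x = ψ v → ∃ c : ℝ, x - v = c • (w - v) := by
        set W : Submodule ℝ (EuclideanSpace ℝ (Fin (k+1))) :=
          D ⊓ LinearMap.ker (ψ : EuclideanSpace ℝ (Fin (k+1)) →ₗ[ℝ] ℝ) with hWdef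
        have hwW : w - v ∈ W := by
          refine Submodule.mem_inf.mpr ⟨?_, ?_⟩
          · have := AffineSubspace.vsub_mem_direction (hNL hwN) (hNL hvN)
            simpa [vsub_eq_sub] using this
          · rw [LinearMap.mem_ker]
            show ψ (w - v) = 0
            rw [map_sub, hψw]; ring
        have hfinW : Module.finrank ℝ W ≤ 1 := by
          by_contra hcon
          push_neg at hcon
          have hWD : W ≤ D := inf_le_left
          have hWeq : W = D := by
            apply Submodule.eq_of_le_of_finrank_le hWD
            rw [hL]
            have := Submodule.finrank_mono hWD
            rw [hL] at this
            omega
          have hd₀W : d₀ ∈ W := hWeq ▸ hd₀D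
          have := (Submodule.mem_inf.mp hd₀W).2
          rw [LinearMap.mem_ker] at this
          exact hψd₀ this
        have hWspan : Submodule.span ℝ ({w - v} : Set (EuclideanSpace ℝ (Fin (k+1)))) = W := by
          apply Submodule.eq_of_le_of_finrank_le
          · exact Submodule.span_le.mpr (Set.singleton_subset_iff.mpr hwW)
          · rw [finrank_span_singleton hwvne]
            exact hfinW
        intro x hxN hxψ
        have hxW : x - v ∈ W := by
          refine Submodule.mem_inf.mpr ⟨?_, ?_⟩
          · have := AffineSubspace.vsub_mem_direction (hNL hxN) (hNL hvN)
            simpa [vsub_eq_sub] using this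
          · rw [LinearMap.mem_ker]
            show ψ (x - v) = 0
            rw [map_sub, hxψ]; ring
        rw [← hWspan] at hxW
        obtain ⟨c, hc⟩ := Submodule.mem_span_singleton.mp hxW
        exact ⟨c, hc.symm⟩
      have hsubT : {x ∈ N | ψ x = ψ v} ⊆ T := by
        rintro x ⟨hxN, hxψ⟩
        obtain ⟨c, hc⟩ := hWle x hxN hxψ
        refine ⟨hNP hxN, ?_⟩
        have hx : x = v + c • (w - v) := by
          rw [← hc]; abel
        have : φ x = φ v + c * (φ w - φ v) := by
          rw [hx, map_add, map_smul, map_sub]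
          simp [smul_eq_mul]
        rw [this, hφw]; ring
      exact ⟨T, φ, ⟨hTexp, ⟨m, hmT⟩, hpdimT⟩, hzφ, hφw, rfl, hsubT⟩
    -- edges are 1-dimensional exposed faces of N
    have hedge : ∀ (w : EuclideanSpace ℝ (Fin (k+1))) (ψ : EuclideanSpace ℝ (Fin (k+1)) →L[ℝ] ℝ),
        w ∈ N → w ≠ v → (∀ x ∈ N, ψ x ≤ ψ v) → ψ w = ψ v → ψ d₀ ≠ 0 →
        IsFaceDim N {x ∈ N | ψ x = ψ v} 1 := by
      intro w ψ hwN hwv hψle hψw hψd₀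
      have hwvne : w - v ≠ 0 := sub_ne_zero.mpr hwv
      have hwS : w ∈ {x ∈ N | ψ x = ψ v} := ⟨hwN, hψw⟩
      have hvS : v ∈ {x ∈ N | ψ x = ψ v} := ⟨hvN, rfl⟩
      refine ⟨?_, ⟨v, hvS⟩, ?_⟩
      · intro _
        refine ⟨ψ, ?_⟩
        ext x
        simp only [Set.mem_setOf_eq]
        constructor
        · rintro ⟨hxN, hxe⟩
          exact ⟨hxN, fun y hy => by rw [hxe]; exact hψle y hy⟩
        · rintro ⟨hxN, hxmax⟩
          exact ⟨hxN, le_antisymm (hψle x hxN) (hxmax v hvN)⟩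
      · set W : Submodule ℝ (EuclideanSpace ℝ (Fin (k+1))) :=
          D ⊓ LinearMap.ker (ψ : EuclideanSpace ℝ (Fin (k+1)) →ₗ[ℝ] ℝ) with hWdef
        have hfinW : Module.finrank ℝ W ≤ 1 := by
          by_contra hcon
          push_neg at hcon
          have hWD : W ≤ D := inf_le_left
          have hWeq : W = D := by
            apply Submodule.eq_of_le_of_finrank_le hWD
            rw [hL]
            have := Submodule.finrank_mono hWD
            rw [hL] at this
            omega
          have hd₀W : d₀ ∈ W := hWeq ▸ hd₀D
          have := (Submodule.mem_inf.mp hd₀W).2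
          rw [LinearMap.mem_ker] at this
          exact hψd₀ this
        have hvsle : vectorSpan ℝ {x ∈ N | ψ x = ψ v} ≤ W := by
          rw [vectorSpan_def, Submodule.span_le]
          rintro x hx
          rw [Set.mem_vsub] at hx
          obtain ⟨a, ha, b, hb, rfl⟩ := hx
          refine Submodule.mem_inf.mpr ⟨?_, ?_⟩
          · have := AffineSubspace.vsub_mem_direction (hNL ha.1) (hNL hb.1)
            simpa [vsub_eq_sub] using this
          · rw [LinearMap.mem_ker]
            show ψ (a -ᵥ b) = 0
            rw [vsub_eq_sub, map_sub, ha.2, hb.2]; ring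
        have hge : 1 ≤ Module.finrank ℝ (vectorSpan ℝ {x ∈ N | ψ x = ψ v}) := by
          by_contra hcon
          push_neg at hcon
          have h0 : Module.finrank ℝ (vectorSpan ℝ {x ∈ N | ψ x = ψ v}) = 0 := by omega
          have hbot : vectorSpan ℝ {x ∈ N | ψ x = ψ v} = ⊥ := Submodule.finrank_eq_zero.mp h0
          have hmem : w - v ∈ vectorSpan ℝ {x ∈ N | ψ x = ψ v} := by
            have := vsub_mem_vectorSpan ℝ hwS hvS
            simpa [vsub_eq_sub] using this
          rw [hbot] at hmem
          exact hwvne (by simpa using hmem)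
        have hle1 := Submodule.finrank_mono hvsle
        rw [pdim, direction_affineSpan]
        omega
    have hS₁face : IsFaceDim N {x ∈ N | h₁ x = h₁ v} 1 :=
      hedge w₁ h₁ (hRN w₁ hw₁R) (hRv w₁ hw₁R) hNh₁ hw₁S hh₁d₀
    have hS₂face : IsFaceDim N {x ∈ N | h₂ x = h₂ v} 1 :=
      hedge w₂ h₂ (hRN w₂ hw₂R) (hRv w₂ hw₂R) hNh₂ hw₂S hh₂d₀
    obtain ⟨T₁, φ₁, hT₁face, hφ₁z, hφ₁w, hT₁def, hsub₁⟩ :=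
      hfacet w₁ h₁ (hRN w₁ hw₁R) (hRv w₁ hw₁R) hNh₁ hw₁S hh₁d₀
    obtain ⟨T₂, φ₂, hT₂face, hφ₂z, hφ₂w, hT₂def, hsub₂⟩ :=
      hfacet w₂ h₂ (hRN w₂ hw₂R) (hRv w₂ hw₂R) hNh₂ hw₂S hh₂d₀
    have hF₁ : f (w₁ - v) < 0 := fneg w₁ hw₁R
    have hF₂ : f (w₂ - v) < 0 := fneg w₂ hw₂R
    have hg₁ : g (w₁ - v) = -(t₁ * f (w₁ - v)) := by
      have := keyg w₁ hw₁R
      rw [← hw₁t] at this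
      exact this
    have hg₂ : g (w₂ - v) = -(t₂ * f (w₂ - v)) := by
      have := keyg w₂ hw₂R
      rw [← hw₂t] at this
      exact this
    have hS₁ne : ({x ∈ N | h₁ x = h₁ v} : Set _) ≠ {x ∈ N | h₂ x = h₂ v} := by
      intro h
      have hw₁mem : w₁ ∈ {x ∈ N | h₁ x = h₁ v} := ⟨hRN w₁ hw₁R, hw₁S⟩
      rw [h] at hw₁mem
      have hval := hval₂ w₁ hw₁R
      rw [← hw₁t] at hval
      have : h₂ w₁ - h₂ v < 0 := by
        rw [hval]
        have : 0 < -(f (w₁ - v)) := by linarith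
        nlinarith
      have := hw₁mem.2
      linarith
    have hT₁₂ : T₁ ≠ T₂ := by
      intro hT
      have hw₂T₁ : w₂ ∈ T₁ := by
        rw [hT]
        exact hsub₂ ⟨hRN w₂ hw₂R, hw₂S⟩
      rw [hT₁def] at hw₂T₁
      have hφ₁w₂ : φ₁ w₂ = φ₁ v := hw₂T₁.2
      have h1 : φ₁ (w₁ - v) = 0 := by rw [map_sub, hφ₁w]; ring
      have h2 : φ₁ (w₂ - v) = 0 := by rw [map_sub, hφ₁w₂]; ring
      have hli : LinearIndependent ℝ ![w₁ - v, w₂ - v] := by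
        rw [LinearIndependent.pair_iff]
        intro s r hsr
        have e1 : s * f (w₁ - v) + r * f (w₂ - v) = 0 := by
          have h0 := congrArg (fun x => f x) hsr
          simpa [map_add, map_smul, smul_eq_mul] using h0
        have e2 : s * g (w₁ - v) + r * g (w₂ - v) = 0 := by
          have h0 := congrArg (fun x => g x) hsr
          simpa [map_add, map_smul, smul_eq_mul] using h0
        rw [hg₁, hg₂] at e2
        have e2' : s * (t₁ * f (w₁ - v)) + r * (t₂ * f (w₂ - v)) = 0 := by linarith
        have h3 : r * (f (w₂ - v) * (t₂ - t₁)) = 0 := by linear_combination e2' - t₁ * e1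
        have h4 : f (w₂ - v) * (t₂ - t₁) ≠ 0 :=
          mul_ne_zero (ne_of_lt hF₂) (ne_of_gt (sub_pos.mpr hlt))
        have hr : r = 0 := by
          rcases mul_eq_zero.mp h3 with h | h
          · exact h
          · exact absurd h h4
        have hs : s = 0 := by
          rw [hr] at e1
          simp at e1
          rcases e1 with h | h
          · exact h
          · exfalso
            rw [← map_sub] at h
            exact (ne_of_lt hF₁) h
        exact ⟨hs, hr⟩
      have hspan : Submodule.span ℝ (Set.range ![w₁ - v, w₂ - v]) = D := by
        apply Submodule.eq_of_le_of_finrank_le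
        · rw [Submodule.span_le]
          rintro x ⟨i, rfl⟩
          fin_cases i
          · show (![w₁ - v, w₂ - v] 0) ∈ (D : Set _)
            simp only [Matrix.cons_val_zero]
            have := AffineSubspace.vsub_mem_direction (hNL (hRN w₁ hw₁R)) (hNL hvN)
            simpa [vsub_eq_sub] using this
          · show (![w₁ - v, w₂ - v] 1) ∈ (D : Set _)
            simp only [Matrix.cons_val_one, Matrix.head_cons]
            have := AffineSubspace.vsub_mem_direction (hNL (hRN w₂ hw₂R)) (hNL hvN)
            simpa [vsub_eq_sub] using this
        · rw [hL, finrank_span_eq_card hli]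
          simp
      have hzv : z₀ - v ∈ D := by
        have := AffineSubspace.vsub_mem_direction (hNL hzN) (hNL hvN)
        simpa [vsub_eq_sub] using this
      have hDker : D ≤ LinearMap.ker (φ₁ : EuclideanSpace ℝ (Fin (k+1)) →ₗ[ℝ] ℝ) := by
        rw [← hspan, Submodule.span_le]
        rintro x ⟨i, rfl⟩
        fin_cases i
        · show (![w₁ - v, w₂ - v] 0) ∈ (LinearMap.ker (φ₁ : EuclideanSpace ℝ (Fin (k+1)) →ₗ[ℝ] ℝ) : Set _)
          simp only [Matrix.cons_val_zero]
          rw [SetLike.mem_coe, LinearMap.mem_ker]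
          exact h1
        · show (![w₁ - v, w₂ - v] 1) ∈ (LinearMap.ker (φ₁ : EuclideanSpace ℝ (Fin (k+1)) →ₗ[ℝ] ℝ) : Set _)
          simp only [Matrix.cons_val_one, Matrix.head_cons]
          rw [SetLike.mem_coe, LinearMap.mem_ker]
          exact h2
      have h0 : φ₁ (z₀ - v) = 0 := hDker hzv
      rw [map_sub] at h0
      linarith
    exact ⟨{x ∈ N | h₁ x = h₁ v}, {x ∈ N | h₂ x = h₂ v}, T₁, T₂, hS₁ne, hS₁face, hS₂face,
      ⟨hvN, rfl⟩, ⟨hvN, rfl⟩, hT₁face, hT₂face, hT₁₂, hsub₁, hsub₂⟩
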